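/- Let v(t_1, ..., t_m) = ∏_{1 ≤ i < j ≤ m} (t_j - t_i) denote the Vandermonde determinant. Then there is a constant c_m > 0 (depending only on m) such that for all real t_1, ..., t_m, the iterated integral ∫_{t_1}^{t_2} ... ∫_{t_{m-1}}^{t_m} v(s_1, ..., s_{m-1}) ds_1 ... ds_{m-1} equals c_m · v(t_1, ..., t_m). -/
import Mathlib

open MeasureTheory

/-- Iterated integral: `iterInt m F t = ∫_{t_0}^{t_1} ⋯ ∫_{t_{m-1}}^{t_m} F(s) ds`. -/
noncomputable def iterInt : (m : ℕ) → ((Fin m → ℝ) → ℝ) → (Fin (m + 1) → ℝ) → ℝ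
  | 0, F, _ => F ![]
  | m + 1, F, t =>
      ∫ s in (t 0)..(t 1), iterInt m (fun u => F (Fin.cons s u)) (fun i => t i.succ)

/-- The Vandermonde polynomial `v(t_1, ..., t_m) = ∏_{i < j} (t_j - t_i)`. -/
def vmd (m : ℕ) (t : Fin m → ℝ) : ℝ := ∏ p : Fin m, ∏ q ∈ Finset.Ioi p, (t q - t p)

lemma iterInt_sum_pow : ∀ (m : ℕ) {ι : Type} (A : Finset ι) (c : ι → ℝ) (k : ι → Fin m → ℕ)
    (t : Fin (m + 1) → ℝ),
    iterInt m (fun s => ∑ x ∈ A, c x * ∏ i, s i ^ k x i) t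
      = ∑ x ∈ A, c x * ∏ i : Fin m, ∫ y in (t i.castSucc)..(t i.succ), y ^ k x i
  | 0, ι, A, c, k, t => by simp [iterInt]
  | (m + 1), ι, A, c, k, t => by
    rw [iterInt]
    have h1 : ∀ s : ℝ,
        (fun u : Fin m → ℝ => ∑ x ∈ A, c x * ∏ i, (Fin.cons s u : Fin (m+1) → ℝ) i ^ k x i)
          = fun u => ∑ x ∈ A, (c x * s ^ k x 0) * ∏ i : Fin m, u i ^ k x i.succ := by
      intro s; funext u
      refine Finset.sum_congr rfl fun x _ => ?_
      rw [Fin.prod_univ_succ]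
      simp [mul_assoc]
    simp_rw [h1, iterInt_sum_pow m A _ _ _]
    rw [intervalIntegral.integral_finset_sum (fun x _ => by
      apply Continuous.intervalIntegrable; fun_prop)]
    refine Finset.sum_congr rfl fun x _ => ?_
    rw [intervalIntegral.integral_mul_const, intervalIntegral.integral_const_mul,
      Fin.prod_univ_succ]
    simp only [Fin.succ_castSucc, Fin.castSucc_zero, Fin.succ_zero_eq_one]
    ring

lemma det_pow_sub (m : ℕ) (t : Fin (m + 1) → ℝ) :
    (Matrix.of fun i j : Fin m =>
        t i.succ ^ ((j : ℕ) + 1) - t i.castSucc ^ ((j : ℕ) + 1)).det = vmd (m + 1) t := by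
  classical
  set V : Matrix (Fin (m + 1)) (Fin (m + 1)) ℝ := Matrix.vandermonde t with hV
  set L : Matrix (Fin (m + 1)) (Fin (m + 1)) ℝ :=
    Matrix.of fun i j => (if i = j then (1 : ℝ) else 0) -
      (if (i : ℕ) = (j : ℕ) + 1 then (1 : ℝ) else 0) with hLdef
  have hL : L.det = 1 := by
    rw [Matrix.det_of_lowerTriangular L (fun i j hij => by
      have h1 : i ≠ j := Fin.ne_of_lt hij
      have h2 : (i : ℕ) ≠ (j : ℕ) + 1 := by
        have h0 : (i : ℕ) < (j : ℕ) := hij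
        omega
      simp [hLdef, h1, h2])]
    have : ∀ i : Fin (m + 1), L i i = 1 := fun i => by simp [hLdef]
    simp [this]
  have hmul0 : ∀ j, (L * V) 0 j = V 0 j := by
    intro j
    rw [Matrix.mul_apply]
    have h : ∀ k : Fin (m + 1), L 0 k * V k j = if k = 0 then V 0 j else 0 := by
      intro k
      rcases eq_or_ne k 0 with rfl | hk
      · simp [hLdef]
      · have h1 : (0 : Fin (m+1)) ≠ k := Ne.symm hk
        have h2 : ((0 : Fin (m+1)) : ℕ) ≠ (k : ℕ) + 1 := by simp
        simp [hLdef, h1, h2, hk]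
    simp [h]
  have hmulS : ∀ (i : Fin m) (j : Fin (m + 1)),
      (L * V) i.succ j = V i.succ j - V i.castSucc j := by
    intro i j
    rw [Matrix.mul_apply]
    have h : ∀ k : Fin (m + 1), L i.succ k * V k j
        = (if k = i.succ then V k j else 0) - (if k = i.castSucc then V k j else 0) := by
      intro k
      have h2 : (((i.succ : Fin (m + 1)) : ℕ) = (k : ℕ) + 1) ↔ k = i.castSucc := by
        rw [Fin.ext_iff, Fin.val_succ, Fin.coe_castSucc]; omega
      simp only [hLdef, Matrix.of_apply, sub_mul, one_mul, ite_mul, zero_mul]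
      simp only [h2]
      congr 1
      exact if_congr eq_comm rfl rfl
    rw [Finset.sum_congr rfl (fun k _ => h k), Finset.sum_sub_distrib]
    simp [Finset.sum_ite_eq']
  have h1 : (L * V).det = V.det := by rw [Matrix.det_mul, hL, one_mul]
  have h2 : (L * V).det
      = (Matrix.of fun i j : Fin m =>
          t i.succ ^ ((j : ℕ) + 1) - t i.castSucc ^ ((j : ℕ) + 1)).det := by
    rw [Matrix.det_succ_column_zero, Fin.sum_univ_succ]
    have hz : ∀ i : Fin m, (L * V) i.succ 0 = 0 := by
      intro i; rw [hmulS]; simp [hV, Matrix.vandermonde]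
    have h00 : (L * V) 0 0 = 1 := by rw [hmul0]; simp [hV, Matrix.vandermonde]
    simp only [hz, h00, Fin.val_zero, pow_zero, one_mul, mul_zero, zero_mul,
      Finset.sum_const_zero, add_zero, Fin.val_succ, mul_one]
    congr 1
    ext i j
    rw [Matrix.submatrix_apply, Fin.succAbove_zero, hmulS]
    simp [hV, Matrix.vandermonde, Fin.val_succ]
  rw [← h2, h1, hV, Matrix.det_vandermonde]
  rfl

/-- The iterated integral of the Vandermonde determinant in `m` variables is a positive
constant multiple of the Vandermonde determinant in `m + 1` variables. -/
theorem statement1 (m : ℕ) :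
    ∃ c : ℝ, 0 < c ∧ ∀ t : Fin (m + 1) → ℝ, iterInt m (vmd m) t = c * vmd (m + 1) t := by
  classical
  refine ⟨∏ j : Fin m, (1 : ℝ) / ((j : ℕ) + 1),
    Finset.prod_pos (fun j _ => by positivity), fun t => ?_⟩
  have hv : vmd m = fun s => ∑ σ : Equiv.Perm (Fin m),
      ((Equiv.Perm.sign σ : ℤ) : ℝ) * ∏ i, s i ^ ((σ i : ℕ)) := by
    funext s
    have h1 : vmd m s = ((Matrix.vandermonde s).transpose).det := by
      rw [Matrix.det_transpose, Matrix.det_vandermonde]; rfl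
    rw [h1, Matrix.det_apply']
    simp [Matrix.vandermonde]
  rw [hv, iterInt_sum_pow m (Finset.univ : Finset (Equiv.Perm (Fin m)))
    (fun σ => ((Equiv.Perm.sign σ : ℤ) : ℝ)) (fun σ i => ((σ i : ℕ))) t]
  set N : Matrix (Fin m) (Fin m) ℝ := Matrix.of fun i j =>
    t i.succ ^ ((j : ℕ) + 1) - t i.castSucc ^ ((j : ℕ) + 1) with hN
  set A : Matrix (Fin m) (Fin m) ℝ :=
    Matrix.of fun i j => (1 / ((j : ℕ) + 1)) * N i j with hA
  have step1 : ∑ σ : Equiv.Perm (Fin m), ((Equiv.Perm.sign σ : ℤ) : ℝ)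
      * ∏ i, ∫ y in (t i.castSucc)..(t i.succ), y ^ ((σ i : ℕ)) = A.transpose.det := by
    rw [Matrix.det_apply']
    refine Finset.sum_congr rfl fun σ _ => ?_
    congr 1
    refine Finset.prod_congr rfl fun i _ => ?_
    rw [integral_pow]
    simp only [hA, hN, Matrix.transpose_apply, Matrix.of_apply]
    ring
  rw [step1, Matrix.det_transpose, hA, Matrix.det_mul_row, det_pow_sub]
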